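/- arXiv:1801.06290 — 8 statements merged into one kernel-verified Lean document; each statement's English description precedes it below -/
import Mathlib

section
/- Let γ ∈ (0°, 180°) and let p₀, p₁, …, p_k be points in the plane such that there exists a unit vector d with the property that the angle between every edge vector p_{i+1} − p_i and d is at most γ/2 (i.e., all edge vectors lie in a closed wedge of angular width γ). Then the total Euclidean length Σᵢ ‖p_{i+1} − p_i‖ of the path is at most (1/cos(γ/2)) · ‖p_k − p₀‖. -/
open Real

noncomputable section

/-- Euclidean dot product of two plane vectors (represented as complex numbers). -/
def dot2 (u v : ℂ) : ℝ := u.re * v.re + u.im * v.im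

lemma dot2_le (u v : ℂ) : dot2 u v ≤ ‖u‖ * ‖v‖ := by
  have h1 : dot2 u v = (u * (starRingEnd ℂ) v).re := by
    simp [dot2, Complex.mul_re]
  have h2 : (u * (starRingEnd ℂ) v).re ≤ ‖u * (starRingEnd ℂ) v‖ :=
    Complex.re_le_norm _
  rw [h1]
  calc (u * (starRingEnd ℂ) v).re ≤ ‖u * (starRingEnd ℂ) v‖ := h2
    _ = ‖u‖ * ‖v‖ := by rw [norm_mul, Complex.norm_conj]

lemma dot2_sub (u w v : ℂ) : dot2 (u - w) v = dot2 u v - dot2 w v := by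
  simp [dot2, Complex.sub_re, Complex.sub_im]; ring

/-- If all edge vectors of a polygonal path lie in a closed wedge of
angular width `γ` (i.e. make angle at most `γ/2` with a common unit direction `d`),
then the total length of the path is at most `(1 / cos (γ/2)) * ‖p k - p 0‖`. -/
theorem angle_monotone_path_stretch (γ : ℝ) (hγ0 : 0 < γ) (hγπ : γ < π)
    (k : ℕ) (p : ℕ → ℂ)
    (h : ∃ d : ℂ, ‖d‖ = 1 ∧ ∀ i < k,
      ‖p (i + 1) - p i‖ * Real.cos (γ / 2) ≤ dot2 (p (i + 1) - p i) d) :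
    ∑ i ∈ Finset.range k, ‖p (i + 1) - p i‖ ≤ (1 / Real.cos (γ / 2)) * ‖p k - p 0‖ := by
  obtain ⟨d, hd, hdot⟩ := h
  have hcos : 0 < Real.cos (γ / 2) := by
    apply Real.cos_pos_of_mem_Ioo
    constructor <;> [linarith [Real.pi_pos]; linarith]
  have key : (∑ i ∈ Finset.range k, ‖p (i + 1) - p i‖) * Real.cos (γ / 2)
      ≤ ‖p k - p 0‖ := by
    calc (∑ i ∈ Finset.range k, ‖p (i + 1) - p i‖) * Real.cos (γ / 2)
        = ∑ i ∈ Finset.range k, ‖p (i + 1) - p i‖ * Real.cos (γ / 2) := by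
          rw [Finset.sum_mul]
      _ ≤ ∑ i ∈ Finset.range k, dot2 (p (i + 1) - p i) d := by
          apply Finset.sum_le_sum
          intro i hi
          exact hdot i (Finset.mem_range.mp hi)
      _ = dot2 (p k - p 0) d := by
          simp only [dot2_sub]
          exact Finset.sum_range_sub (fun n => dot2 (p n) d) k
      _ ≤ ‖p k - p 0‖ * ‖d‖ := dot2_le _ _
      _ = ‖p k - p 0‖ := by rw [hd, mul_one]
  rw [div_mul_eq_mul_div, le_div_iff₀ hcos, one_mul]
  exact key
end
end

section
/- Let p₀, …, p_k be an angle-monotone path of width 90°, i.e., all edge vectors p_{i+1} − p_i lie in a closed 90° wedge. Then the path is self-approaching toward p_k: for all indices i ≤ j, ‖p_k − p_j‖ ≤ ‖p_k − p_i‖; in fact, the Euclidean distance from any point on the path to p_k is non-increasing along the path. -/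
open Real

noncomputable section

lemma norm_sq_c (z : ℂ) : ‖z‖^2 = z.re^2 + z.im^2 := by
  rw [Complex.sq_norm, Complex.normSq_apply]; ring

set_option maxHeartbeats 1000000 in
lemma key (d v e : ℂ) (hd : ‖d‖ = 1)
    (hv : ‖v‖ * Real.cos (π/4) ≤ dot2 v d)
    (he : ‖e‖ * Real.cos (π/4) ≤ dot2 e d) : ‖v‖ ≤ ‖v + e‖ := by
  have hc : Real.cos (π/4) = Real.sqrt 2 / 2 := Real.cos_pi_div_four
  have h2 : (Real.sqrt 2)^2 = 2 := Real.sq_sqrt (by norm_num)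
  have hd2 : d.re^2 + d.im^2 = 1 := by
    have := norm_sq_c d; rw [hd] at this; linarith
  have hv2 := norm_sq_c v
  have he2 := norm_sq_c e
  have hve2 := norm_sq_c (v + e)
  simp only [Complex.add_re, Complex.add_im] at hve2
  have hnv : (0:ℝ) ≤ ‖v‖ := norm_nonneg v
  have hne : (0:ℝ) ≤ ‖e‖ := norm_nonneg e
  rw [hc] at hv he
  unfold dot2 at hv he
  have hdve : 0 ≤ v.re * e.re + v.im * e.im := by
    set s := v.im * d.re - v.re * d.im with hsdef
    set t := e.im * d.re - e.re * d.im with htdef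
    have hv3 : (v.re * d.re + v.im * d.im)^2 + s^2 = ‖v‖^2 := by
      rw [hsdef]; linear_combination (v.re^2 + v.im^2) * hd2 - hv2
    have he3 : (e.re * d.re + e.im * d.im)^2 + t^2 = ‖e‖^2 := by
      rw [htdef]; linear_combination (e.re^2 + e.im^2) * hd2 - he2
    have hid : v.re * e.re + v.im * e.im =
        (v.re * d.re + v.im * d.im) * (e.re * d.re + e.im * d.im) + s * t := by
      rw [hsdef, htdef]; linear_combination -(v.re * e.re + v.im * e.im) * hd2
    have hC : ‖v‖ * (Real.sqrt 2/2) * (‖e‖ * (Real.sqrt 2/2)) ≤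
        (v.re * d.re + v.im * d.im) * (e.re * d.re + e.im * d.im) :=
      mul_le_mul hv he (by positivity) (le_trans (by positivity) hv)
    have hA : s^2 ≤ ‖v‖^2/2 := by
      nlinarith [hv3, h2, mul_le_mul hv hv (by positivity) (le_trans (by positivity) hv)]
    have hB : t^2 ≤ ‖e‖^2/2 := by
      nlinarith [he3, h2, mul_le_mul he he (by positivity) (le_trans (by positivity) he)]
    have hs1 : s * Real.sqrt 2 ≤ ‖v‖ := by nlinarith [hA, h2, hnv, Real.sqrt_nonneg 2]
    have hs2' : -‖v‖ ≤ s * Real.sqrt 2 := by nlinarith [hA, h2, hnv, Real.sqrt_nonneg 2]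
    have ht1 : t * Real.sqrt 2 ≤ ‖e‖ := by nlinarith [hB, h2, hne, Real.sqrt_nonneg 2]
    have ht2' : -‖e‖ ≤ t * Real.sqrt 2 := by nlinarith [hB, h2, hne, Real.sqrt_nonneg 2]
    have hC2 : ‖v‖ * ‖e‖ / 2 ≤ (v.re * d.re + v.im * d.im) * (e.re * d.re + e.im * d.im) := by
      have : ‖v‖ * (Real.sqrt 2/2) * (‖e‖ * (Real.sqrt 2/2)) = ‖v‖ * ‖e‖ / 2 := by
        linear_combination ‖v‖ * ‖e‖ / 4 * h2
      linarith [hC, this.symm.le]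
    have huw : s * Real.sqrt 2 * (t * Real.sqrt 2) = 2 * (s * t) := by
      linear_combination s * t * h2
    nlinarith [hC2, huw, hid,
      mul_nonneg (by linarith : (0:ℝ) ≤ ‖v‖ - s * Real.sqrt 2) (by linarith : (0:ℝ) ≤ ‖e‖ - t * Real.sqrt 2),
      mul_nonneg (by linarith : (0:ℝ) ≤ ‖v‖ + s * Real.sqrt 2) (by linarith : (0:ℝ) ≤ ‖e‖ + t * Real.sqrt 2)]
  have hsq : ‖v‖^2 ≤ ‖v + e‖^2 := by
    rw [hv2, hve2]
    have hexp : (v.re+e.re)^2+(v.im+e.im)^2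
        = (v.re^2+v.im^2) + 2*(v.re*e.re+v.im*e.im) + (e.re^2+e.im^2) := by ring
    linarith [hdve, sq_nonneg e.re, sq_nonneg e.im]
  exact (pow_le_pow_iff_left₀ hnv (norm_nonneg _) two_ne_zero).mp hsq

lemma dot2_add (x y d : ℂ) : dot2 (x + y) d = dot2 x d + dot2 y d := by
  simp [dot2, Complex.add_re, Complex.add_im]; ring

lemma tail_dot (k : ℕ) (p : ℕ → ℂ) (d : ℂ)
    (h : ∀ i < k, ‖p (i + 1) - p i‖ * Real.cos (π/4) ≤ dot2 (p (i + 1) - p i) d) :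
    ∀ n m, m + n = k → ‖p k - p m‖ * Real.cos (π/4) ≤ dot2 (p k - p m) d := by
  intro n
  induction n with
  | zero =>
    intro m hm
    subst hm
    simp [dot2]
  | succ n ih =>
    intro m hm
    have hm1 : (m + 1) + n = k := by omega
    have ihm := ih (m + 1) hm1
    have hedge := h m (by omega)
    have hsplit : p k - p m = (p k - p (m + 1)) + (p (m + 1) - p m) := by ring
    have hcos : (0:ℝ) ≤ Real.cos (π/4) := by
      rw [Real.cos_pi_div_four]; positivity
    calc ‖p k - p m‖ * Real.cos (π/4)
        ≤ (‖p k - p (m+1)‖ + ‖p (m+1) - p m‖) * Real.cos (π/4) := by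
          apply mul_le_mul_of_nonneg_right _ hcos
          rw [hsplit]; exact norm_add_le _ _
      _ = ‖p k - p (m+1)‖ * Real.cos (π/4) + ‖p (m+1) - p m‖ * Real.cos (π/4) := by ring
      _ ≤ dot2 (p k - p (m+1)) d + dot2 (p (m+1) - p m) d := add_le_add ihm hedge
      _ = dot2 (p k - p m) d := by rw [hsplit, dot2_add]


/-- An angle-monotone path of width `90°` (all edge vectors within `45°`
of a common unit direction) is self-approaching toward its endpoint: the distance from
the vertices of the path to the final vertex `p k` is non-increasing along the path. -/
theorem angle_monotone_90_self_approaching (k : ℕ) (p : ℕ → ℂ)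
    (h : ∃ d : ℂ, ‖d‖ = 1 ∧ ∀ i < k,
      ‖p (i + 1) - p i‖ * Real.cos (π / 4) ≤ dot2 (p (i + 1) - p i) d) :
    ∀ i j : ℕ, i ≤ j → j ≤ k → ‖p k - p j‖ ≤ ‖p k - p i‖ := by
  obtain ⟨d, hd, hedge⟩ := h
  have step : ∀ m, m + 1 ≤ k → ‖p k - p (m+1)‖ ≤ ‖p k - p m‖ := by
    intro m hm
    have hv := tail_dot k p d hedge (k - (m+1)) (m+1) (by omega)
    have he := hedge m (by omega)
    have := key d (p k - p (m+1)) (p (m+1) - p m) hd hv he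
    have heq : (p k - p (m+1)) + (p (m+1) - p m) = p k - p m := by ring
    rwa [heq] at this
  intro i j hij hjk
  induction j with
  | zero =>
    have : i = 0 := Nat.le_zero.mp hij
    subst this
    exact le_refl _
  | succ n ih =>
    rcases Nat.lt_or_ge i (n+1) with hlt | hge
    · exact le_trans (step n hjk) (ih (by omega) (by omega))
    · have : i = n + 1 := by omega
      subst this; rfl
end
end

section
/- Let p₀, …, p_k be points in ℝ² such that all edge vectors p_{i+1} − p_i lie in a closed wedge of width 90°. Then for every i ≤ j, the vertices p_i, p_j satisfy ‖p_j − p_i‖ ≤ Σ_{l=i}^{j-1} ‖p_{l+1} − p_l‖ ≤ √2 · ‖p_j − p_i‖, i.e., every subpath between two vertices also has stretch factor at most √2 (the increasing-chord property restricted to vertices follows). -/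
open Real

noncomputable section

lemma telescope_aux (p : ℕ → ℂ) (i j : ℕ) (hij : i ≤ j) :
    ∑ l ∈ Finset.Ico i j, (p (l + 1) - p l) = p j - p i := by
  induction j with
  | zero => simp [Nat.le_zero.mp hij]
  | succ n ih =>
    rcases Nat.lt_or_ge i (n + 1) with h | h
    · have hin : i ≤ n := Nat.lt_succ_iff.mp h
      rw [Finset.sum_Ico_succ_top hin, ih hin]; ring
    · have : i = n + 1 := le_antisymm hij h
      simp [this]

/-- If all edge vectors of a polygonal path lie in a common closed wedge
of width `90°`, then every subpath between two vertices has stretch factor at most `√2`: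
`‖p j - p i‖ ≤ Σ_{l=i}^{j-1} ‖p (l+1) - p l‖ ≤ √2 * ‖p j - p i‖`. -/
theorem angle_monotone_90_increasing_chord (k : ℕ) (p : ℕ → ℂ)
    (h : ∃ d : ℂ, ‖d‖ = 1 ∧ ∀ i < k,
      ‖p (i + 1) - p i‖ * Real.cos (π / 4) ≤ dot2 (p (i + 1) - p i) d) :
    ∀ i j : ℕ, i ≤ j → j ≤ k →
      ‖p j - p i‖ ≤ ∑ l ∈ Finset.Ico i j, ‖p (l + 1) - p l‖ ∧
      ∑ l ∈ Finset.Ico i j, ‖p (l + 1) - p l‖ ≤ Real.sqrt 2 * ‖p j - p i‖ := by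
  obtain ⟨d, hd, hedge⟩ := h
  intro i j hij hjk
  have htel := telescope_aux p i j hij
  constructor
  · calc ‖p j - p i‖ = ‖∑ l ∈ Finset.Ico i j, (p (l + 1) - p l)‖ := by rw [htel]
      _ ≤ ∑ l ∈ Finset.Ico i j, ‖p (l + 1) - p l‖ := norm_sum_le _ _
  · have hcos : Real.cos (π / 4) = Real.sqrt 2 / 2 := Real.cos_pi_div_four
    have h1 : (∑ l ∈ Finset.Ico i j, ‖p (l + 1) - p l‖) * (Real.sqrt 2 / 2)
        ≤ dot2 (p j - p i) d := by
      rw [← htel]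
      have hsum : dot2 (∑ l ∈ Finset.Ico i j, (p (l + 1) - p l)) d
          = ∑ l ∈ Finset.Ico i j, dot2 (p (l + 1) - p l) d := by
        simp [dot2, Complex.re_sum, Complex.im_sum, sub_mul, Finset.sum_mul,
          Finset.sum_sub_distrib, Finset.sum_add_distrib]
      rw [hsum, Finset.sum_mul]
      apply Finset.sum_le_sum
      intro l hl
      have hlk : l < k := lt_of_lt_of_le (Finset.mem_Ico.mp hl).2 hjk
      have := hedge l hlk
      rwa [hcos] at this
    have h2 : dot2 (p j - p i) d ≤ ‖p j - p i‖ := by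
      have heq : dot2 (p j - p i) d = ((p j - p i) * (starRingEnd ℂ) d).re := by
        simp [dot2, Complex.mul_re]
      rw [heq]
      calc ((p j - p i) * (starRingEnd ℂ) d).re
          ≤ ‖(p j - p i) * (starRingEnd ℂ) d‖ := Complex.re_le_norm _
        _ = ‖p j - p i‖ := by
            rw [norm_mul, RCLike.norm_conj, hd, mul_one]
    have hs : Real.sqrt 2 * Real.sqrt 2 = 2 := Real.mul_self_sqrt (by norm_num)
    have key := mul_le_mul_of_nonneg_left (h1.trans h2) (Real.sqrt_nonneg 2)
    have hid : Real.sqrt 2 * ((∑ l ∈ Finset.Ico i j, ‖p (l + 1) - p l‖) * (Real.sqrt 2 / 2))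
        = ∑ l ∈ Finset.Ico i j, ‖p (l + 1) - p l‖ := by
      linear_combination (∑ l ∈ Finset.Ico i j, ‖p (l + 1) - p l‖) / 2 * hs
    linarith
end
end

section
/- Suppose every set of m points in general position in the plane contains a subset of at least c·log₂ m points in convex position (with c > 0 a fixed constant, m ≥ 2). Then every set of n ≥ 2 points in general position can be partitioned into at most ⌈2n / (c·log₂ n)⌉ + 1 subsets, each of which is in convex position. -/
open Real

/-- A finite planar point set is in general position if no three distinct points are collinear. -/
def GenPos (S : Finset ℂ) : Prop :=
  ∀ p ∈ S, ∀ q ∈ S, ∀ r ∈ S, p ≠ q → p ≠ r → q ≠ r → ¬ Collinear ℝ ({p, q, r} : Set ℂ)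

/-- A finite point set is in convex position if every point is a vertex of its convex hull. -/
def ConvexPos (T : Finset ℂ) : Prop :=
  ∀ p ∈ T, p ∉ convexHull ℝ ((T.erase p : Finset ℂ) : Set ℂ)



lemma log_le_aux {x : ℝ} (hx : 0 ≤ x) : Real.log (1 + x) ≤ x * (x + 6) / (4 * x + 6) := by
  set g : ℝ → ℝ := fun z => z * (z + 6) / (4 * z + 6) - Real.log (1 + z) with hg
  have hder : ∀ y : ℝ, 0 ≤ y → HasDerivAt g
      (((2*y+6) * (4*y+6) - (y*(y+6)) * 4) / (4*y+6)^2 - 1/(1+y)) y := by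
    intro y hy
    have h1 : HasDerivAt (fun z : ℝ => z * (z + 6)) (2*y+6) y := by
      have := (hasDerivAt_id y).mul ((hasDerivAt_id y).add_const 6)
      simpa [Pi.mul_def] using this.congr_deriv (by simp only [id_eq]; ring)
    have h2 : HasDerivAt (fun z : ℝ => 4 * z + 6) 4 y := by
      simpa using ((hasDerivAt_id y).const_mul 4).add_const 6
    have hne : (4 * y + 6 : ℝ) ≠ 0 := by nlinarith
    have hdiv := h1.div h2 hne
    have h3 : HasDerivAt (fun z : ℝ => (1:ℝ) + z) 1 y := by
      simpa using (hasDerivAt_id y).const_add 1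
    have hne2 : (1 + y : ℝ) ≠ 0 := by nlinarith
    have hlog := h3.log hne2
    exact hdiv.sub hlog
  have hmono : MonotoneOn g (Set.Ici (0:ℝ)) := by
    apply monotoneOn_of_deriv_nonneg (convex_Ici 0)
    · exact fun y hy => ((hder y hy).continuousAt).continuousWithinAt
    · intro y hy
      rw [interior_Ici] at hy
      exact (hder y hy.le).differentiableAt.differentiableWithinAt
    · intro y hy
      rw [interior_Ici] at hy
      rw [(hder y hy.le).deriv]
      have hy' : (0:ℝ) < y := hy
      rw [sub_nonneg, div_le_div_iff₀ (by nlinarith) (by positivity)]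
      nlinarith [pow_pos hy' 3]
  have h0 : g 0 = 0 := by simp [hg]
  have := hmono (Set.self_mem_Ici) (Set.mem_Ici.mpr hx) hx
  rw [h0] at this
  simp only [hg] at this
  linarith

lemma log_lb (r : ℕ) (hr : 5 ≤ r) : (2*(r:ℝ)+1)/((r:ℝ)+2) ≤ Real.log r := by
  have l2 : (0.6931471803:ℝ) < Real.log 2 := Real.log_two_gt_d9
  by_cases h8 : 8 ≤ r
  · have hr8 : Real.log 8 ≤ Real.log r := Real.log_le_log (by norm_num) (by exact_mod_cast h8)
    have h8' : Real.log 8 = 3 * Real.log 2 := by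
      rw [show (8:ℝ) = 2^3 by norm_num, Real.log_pow]; push_cast; ring
    have hub : (2*(r:ℝ)+1)/((r:ℝ)+2) ≤ 2 := by
      rw [div_le_iff₀ (by positivity)]
      push_cast; nlinarith [show (5:ℝ) ≤ (r:ℝ) by exact_mod_cast hr]
    nlinarith
  · have l5 : (1.5862943606:ℝ) ≤ Real.log 5 := by
      have h5 : Real.log 5 = Real.log 4 + Real.log (5/4) := by
        rw [← Real.log_mul (by norm_num) (by norm_num)]; norm_num
      have h4 : Real.log 4 = 2 * Real.log 2 := by
        rw [show (4:ℝ) = 2^2 by norm_num, Real.log_pow]; push_cast; ring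
      have h54 : (1/5:ℝ) ≤ Real.log (5/4) := by
        have h45 := Real.log_le_sub_one_of_pos (show (0:ℝ) < 4/5 by norm_num)
        have hinv : Real.log (5/4) = - Real.log (4/5) := by
          rw [← Real.log_inv]; norm_num
        rw [hinv]; linarith
      linarith
    have l3 : (1:ℝ) ≤ Real.log 3 := by
      have := (Real.lt_log_iff_exp_lt (show (0:ℝ) < 3 by norm_num)).mpr
        (lt_trans Real.exp_one_lt_d9 (by norm_num))
      linarith
    have l6 : (1.6931471803:ℝ) ≤ Real.log 6 := by
      have h6 : Real.log 6 = Real.log 2 + Real.log 3 := by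
        rw [← Real.log_mul (by norm_num) (by norm_num)]; norm_num
      linarith
    interval_cases r
    · rw [show ((5:ℕ):ℝ) = 5 by norm_num]; rw [div_le_iff₀ (by norm_num)]; nlinarith
    · rw [show ((6:ℕ):ℝ) = 6 by norm_num]; rw [div_le_iff₀ (by norm_num)]; nlinarith
    · have l7 : Real.log 6 ≤ Real.log 7 := Real.log_le_log (by norm_num) (by norm_num)
      rw [show ((7:ℕ):ℝ) = 7 by norm_num]; rw [div_le_iff₀ (by norm_num)]; nlinarith

lemma key_ineq (c : ℝ) (hc : 0 < c) (r t : ℕ) (hr : 5 ≤ r) (ht : 3 ≤ t)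
    (hct : c * Real.logb 2 ((r:ℝ) + t) ≤ t) :
    2*(r:ℝ)/(c * Real.logb 2 r) + 1 ≤ 2*((r:ℝ)+t)/(c * Real.logb 2 ((r:ℝ)+t)) := by
  have hrR : (5:ℝ) ≤ (r:ℝ) := by exact_mod_cast hr
  have htR : (3:ℝ) ≤ (t:ℝ) := by exact_mod_cast ht
  set sr : ℝ := (r:ℝ) with hsr
  set st : ℝ := (t:ℝ) with hst
  have hsrpos : (0:ℝ) < sr := by linarith
  have hstpos : (0:ℝ) < st := by linarith
  -- step 1 : log sr ≥ (st + 6 sr)/(2 st + 3 sr)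
  have step1 : (st + 6*sr)/(2*st + 3*sr) ≤ Real.log sr := by
    have h1 : (st + 6*sr)/(2*st + 3*sr) ≤ (2*sr+1)/(sr+2) := by
      rw [div_le_div_iff₀ (by linarith) (by linarith)]
      nlinarith [mul_nonneg (sub_nonneg.mpr htR) (le_of_lt hsrpos)]
    exact h1.trans (log_lb r hr)
  -- step 2 : log (1 + st/sr) ≤ st*(st+6*sr)/(sr*(4*st+6*sr))
  have step2 : Real.log (1 + st/sr) ≤ st*(st+6*sr)/(sr*(4*st+6*sr)) := by
    have := log_le_aux (show (0:ℝ) ≤ st/sr by positivity)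
    have heq : (st/sr) * (st/sr + 6) / (4 * (st/sr) + 6) = st*(st+6*sr)/(sr*(4*st+6*sr)) := by
      field_simp
    linarith [heq ▸ this]
  -- step 3 : log (sr + st) = log sr + log (1 + st/sr)
  have step3 : Real.log (sr + st) = Real.log sr + Real.log (1 + st/sr) := by
    have h : sr + st = sr * (1 + st/sr) := by field_simp
    rw [h, Real.log_mul (ne_of_gt hsrpos) (by positivity)]
  -- step 4 : (sr + st + sr) * log sr ≥ 2 sr * log (sr + st)
  have step4 : 2*sr*Real.log (sr + st) ≤ (sr + st + sr) * Real.log sr := by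
    have h2 : 2*sr*Real.log (1 + st/sr) ≤ st*(st+6*sr)/(2*st+3*sr) := by
      have := mul_le_mul_of_nonneg_left step2 (by positivity : (0:ℝ) ≤ 2*sr)
      have heq : 2*sr*(st*(st+6*sr)/(sr*(4*st+6*sr))) = st*(st+6*sr)/(2*st+3*sr) := by
        field_simp; ring
      linarith [heq ▸ this]
    have h3 : st*((st + 6*sr)/(2*st + 3*sr)) ≤ st * Real.log sr :=
      mul_le_mul_of_nonneg_left step1 (le_of_lt hstpos)
    have heq2 : st*((st + 6*sr)/(2*st + 3*sr)) = st*(st+6*sr)/(2*st+3*sr) := by ring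
    rw [step3]
    nlinarith
  -- step 5 : pass to logb
  have hlog2 : (0:ℝ) < Real.log 2 := Real.log_pos one_lt_two
  have hA : (0:ℝ) < Real.logb 2 sr := Real.logb_pos one_lt_two (by linarith)
  have hB : (0:ℝ) < Real.logb 2 (sr + st) := Real.logb_pos one_lt_two (by linarith)
  have step5 : 2*sr*Real.logb 2 (sr + st) ≤ (sr + st + sr) * Real.logb 2 sr := by
    unfold Real.logb
    rw [← mul_div_assoc, ← mul_div_assoc, div_le_div_iff₀ hlog2 hlog2]
    nlinarith
  -- final
  have hcA : (0:ℝ) < c * Real.logb 2 sr := by positivity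
  have hcB : (0:ℝ) < c * Real.logb 2 (sr + st) := by positivity
  rw [div_add' _ _ _ (ne_of_gt hcA), div_le_div_iff₀ hcA hcB]
  set A := Real.logb 2 sr
  set B := Real.logb 2 (sr + st)
  have e1 : c * (A * B) ≤ st * A := by
    have := mul_le_mul_of_nonneg_left hct (le_of_lt hA)
    nlinarith
  nlinarith [mul_le_mul_of_nonneg_left step5 (le_of_lt hc)]

lemma genPos_mono {S T : Finset ℂ} (h : T ⊆ S) (hS : GenPos S) : GenPos T :=
  fun p hp q hq r hr h1 h2 h3 => hS p (h hp) q (h hq) r (h hr) h1 h2 h3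

lemma convexPos_small {S : Finset ℂ} (hgen : GenPos S) (h : S.card ≤ 3) : ConvexPos S := by
  intro p hp hmem
  have hc : (S.erase p).card ≤ 2 := by
    have := Finset.card_erase_of_mem hp; omega
  interval_cases h0 : (S.erase p).card
  · rw [Finset.card_eq_zero] at h0
    rw [h0] at hmem; simp at hmem
  · rw [Finset.card_eq_one] at h0
    obtain ⟨q, hq⟩ := h0
    have hqm : q ∈ S.erase p := by rw [hq]; simp
    rw [hq] at hmem
    simp [convexHull_singleton] at hmem
    exact (Finset.ne_of_mem_erase hqm) hmem.symm
  · rw [Finset.card_eq_two] at h0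
    obtain ⟨q, r, hqr, h0⟩ := h0
    have hqm : q ∈ S.erase p := by rw [h0]; simp
    have hrm : r ∈ S.erase p := by rw [h0]; simp
    rw [h0] at hmem
    have hmem' : p ∈ convexHull ℝ ({q, r} : Set ℂ) := by
      simpa using hmem
    have hcol : Collinear ℝ ({p, q, r} : Set ℂ) :=
      collinear_insert_of_mem_affineSpan_pair (convexHull_subset_affineSpan _ hmem')
    exact hgen p hp q (Finset.mem_of_mem_erase hqm) r (Finset.mem_of_mem_erase hrm)
      (Ne.symm (Finset.ne_of_mem_erase hqm)) (Ne.symm (Finset.ne_of_mem_erase hrm)) hqr hcol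

lemma convexPos_singleton (p : ℂ) : ConvexPos {p} := by
  intro q hq
  simp only [Finset.mem_singleton] at hq
  subst hq
  simp [Finset.erase_singleton]

/-- If every `m`-point set in general position contains `c·log₂ m` points
in convex position, then every `n`-point set in general position (`n ≥ 2`) can be
partitioned into at most `⌈2n/(c·log₂ n)⌉ + 1` convex-position subsets. -/
theorem urabe_partition (c : ℝ) (hc : 0 < c)
    (hES : ∀ M : Finset ℂ, 2 ≤ M.card → GenPos M →
      ∃ T ⊆ M, c * Real.logb 2 M.card ≤ T.card ∧ ConvexPos T) :
    ∀ S : Finset ℂ, 2 ≤ S.card → GenPos S →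
      ∃ Part : Finset (Finset ℂ),
        (∀ T ∈ Part, T ⊆ S ∧ ConvexPos T) ∧
        (Part : Set (Finset ℂ)).PairwiseDisjoint id ∧
        Part.biUnion id = S ∧
        Part.card ≤ ⌈(2 * S.card : ℝ) / (c * Real.logb 2 S.card)⌉₊ + 1 := by
  have main : ∀ n : ℕ, ∀ S : Finset ℂ, S.card ≤ n → 2 ≤ S.card → GenPos S →
      ∃ Part : Finset (Finset ℂ),
        (∀ T ∈ Part, T ⊆ S ∧ ConvexPos T) ∧
        (Part : Set (Finset ℂ)).PairwiseDisjoint id ∧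
        Part.biUnion id = S ∧
        Part.card ≤ ⌊(2 * S.card : ℝ) / (c * Real.logb 2 S.card)⌋₊ + 1 := by
    intro n
    induction n with
    | zero => intro S h1 h2; omega
    | succ n ih =>
      intro S hle h2 hgen
      have hs2R : (2:ℝ) ≤ (S.card : ℝ) := by exact_mod_cast h2
      have hL : (0:ℝ) < Real.logb 2 (S.card : ℝ) := Real.logb_pos one_lt_two (by linarith)
      have hcL : (0:ℝ) < c * Real.logb 2 (S.card : ℝ) := by positivity
      by_cases hA : c * Real.logb 2 (S.card : ℝ) ≤ 2
      · -- singleton partition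
        refine ⟨S.image (fun p => ({p} : Finset ℂ)), ?_, ?_, ?_, ?_⟩
        · intro T hT
          obtain ⟨p, hp, rfl⟩ := Finset.mem_image.mp hT
          exact ⟨Finset.singleton_subset_iff.mpr hp, convexPos_singleton p⟩
        · intro a ha b hb hab
          simp only [Finset.coe_image, Set.mem_image, Finset.mem_coe] at ha hb
          obtain ⟨p, hp, rfl⟩ := ha
          obtain ⟨q, hq, rfl⟩ := hb
          have : p ≠ q := fun h => hab (by rw [h])
          simp only [id, Function.onFun]
          exact Finset.disjoint_singleton.mpr this
        · ext x
          simp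
        · have h1 : (S.image (fun p => ({p} : Finset ℂ))).card ≤ S.card :=
            Finset.card_image_le
          have h2' : S.card ≤ ⌊(2 * S.card : ℝ) / (c * Real.logb 2 (S.card:ℝ))⌋₊ := by
            apply Nat.le_floor
            rw [le_div_iff₀ hcL]
            nlinarith
          omega
      · push_neg at hA
        obtain ⟨T, hTS, hTcard, hTconv⟩ := hES S h2 hgen
        have htR : (2:ℝ) < (T.card : ℝ) := lt_of_lt_of_le hA hTcard
        have ht3 : 3 ≤ T.card := by
          have : 2 < T.card := by exact_mod_cast htR
          omega
        set R := S \ T with hR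
        have hRS : R ⊆ S := Finset.sdiff_subset
        have hcard : R.card + T.card = S.card := by
          rw [hR, Finset.card_sdiff_of_subset hTS]
          have := Finset.card_le_card hTS
          omega
        have hdisjTR : ∀ U : Finset ℂ, U ⊆ R → Disjoint T U := by
          intro U hU
          rw [Finset.disjoint_left]
          intro x hxT hxU
          exact (Finset.mem_sdiff.mp (hU hxU)).2 hxT
        have hunion : T ∪ R = S := Finset.union_sdiff_of_subset hTS
        have htleS : (T.card : ℝ) ≤ (S.card : ℝ) := by
          exact_mod_cast Finset.card_le_card hTS
        by_cases hR5 : 5 ≤ R.card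
        · -- big remainder: induction
          obtain ⟨PartR, hP1, hP2, hP3, hP4⟩ := ih R (by omega) (by omega)
            (genPos_mono hRS hgen)
          refine ⟨insert T PartR, ?_, ?_, ?_, ?_⟩
          · intro U hU
            rcases Finset.mem_insert.mp hU with rfl | hU
            · exact ⟨hTS, hTconv⟩
            · exact ⟨(hP1 U hU).1.trans hRS, (hP1 U hU).2⟩
          · rw [Finset.coe_insert]
            refine hP2.insert ?_
            intro U hU hne
            exact hdisjTR U (hP1 U (Finset.mem_coe.mp hU)).1
          · rw [Finset.biUnion_insert, hP3]
            exact hunion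
          · have hkey := key_ineq c hc R.card T.card hR5 ht3
              (by rw [show ((R.card:ℝ) + T.card) = (S.card:ℝ) by exact_mod_cast congrArg (Nat.cast : ℕ → ℝ) hcard]; exact hTcard)
            rw [show ((R.card:ℝ) + T.card) = (S.card:ℝ) by exact_mod_cast congrArg (Nat.cast : ℕ → ℝ) hcard] at hkey
            have hrL : (0:ℝ) < Real.logb 2 (R.card : ℝ) := by
              apply Real.logb_pos one_lt_two
              have : (5:ℝ) ≤ (R.card:ℝ) := by exact_mod_cast hR5
              linarith
            have hnn : (0:ℝ) ≤ 2 * R.card / (c * Real.logb 2 (R.card:ℝ)) := by positivity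
            have hfl : ⌊(2 * R.card : ℝ) / (c * Real.logb 2 (R.card:ℝ))⌋₊ + 1
                ≤ ⌊(2 * S.card : ℝ) / (c * Real.logb 2 (S.card:ℝ))⌋₊ := by
              rw [← Nat.floor_add_one hnn]
              apply Nat.floor_mono
              calc 2 * (R.card:ℝ) / (c * Real.logb 2 (R.card:ℝ)) + 1
                  = 2 * (R.card:ℝ) / (c * Real.logb 2 (R.card:ℝ)) + 1 := rfl
                _ ≤ 2 * (S.card:ℝ) / (c * Real.logb 2 (S.card:ℝ)) := by
                    have := hkey
                    push_cast at this ⊢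
                    linarith
            have := Finset.card_insert_le T PartR
            omega
        · -- small remainder
          push_neg at hR5
          rcases Finset.eq_empty_or_nonempty R with hRe | ⟨p, hp⟩
          · have hTSe : T = S := by
              rw [← hunion, hRe, Finset.union_empty]
            refine ⟨{T}, ?_, ?_, ?_, ?_⟩
            · intro U hU
              rw [Finset.mem_singleton] at hU
              subst hU
              exact ⟨hTS, hTconv⟩
            · simp
            · simp [hTSe]
            · simp
          · refine ⟨insert T {R.erase p, {p}}, ?_, ?_, ?_, ?_⟩
            · intro U hU
              simp only [Finset.mem_insert, Finset.mem_singleton] at hU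
              rcases hU with rfl | rfl | rfl
              · exact ⟨hTS, hTconv⟩
              · refine ⟨(Finset.erase_subset p R).trans hRS, ?_⟩
                apply convexPos_small (genPos_mono ((Finset.erase_subset p R).trans hRS) hgen)
                have := Finset.card_erase_of_mem hp
                omega
              · refine ⟨Finset.singleton_subset_iff.mpr (hRS hp), convexPos_singleton p⟩
            · intro a ha b hb hab
              simp only [Finset.coe_insert, Set.mem_insert_iff, Finset.coe_singleton,
                Set.mem_singleton_iff] at ha hb
              have dTe : Disjoint T (R.erase p) := hdisjTR _ (Finset.erase_subset p R)
              have dTp : Disjoint T ({p} : Finset ℂ) :=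
                hdisjTR _ (Finset.singleton_subset_iff.mpr hp)
              have dep : Disjoint (R.erase p) ({p} : Finset ℂ) := by
                simp [Finset.disjoint_singleton_right]
              rcases ha with rfl | rfl | rfl <;> rcases hb with rfl | rfl | rfl <;>
                first
                  | exact absurd rfl hab
                  | exact dTe
                  | exact dTp
                  | exact dep
                  | exact dTe.symm
                  | exact dTp.symm
                  | exact dep.symm
            · rw [Finset.biUnion_insert]
              have : ({R.erase p, {p}} : Finset (Finset ℂ)).biUnion id = R := by
                rw [Finset.biUnion_insert, Finset.singleton_biUnion]
                simp only [id]
                ext x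
                simp only [Finset.mem_union, Finset.mem_erase, Finset.mem_singleton]
                constructor
                · rintro (⟨_, hx⟩ | rfl)
                  · exact hx
                  · exact hp
                · intro hx
                  by_cases hxp : x = p
                  · right; exact hxp
                  · left; exact ⟨hxp, hx⟩
              rw [this]
              exact hunion
            · have hc3 : (insert T {R.erase p, {p}} : Finset (Finset ℂ)).card ≤ 3 := by
                apply le_trans (Finset.card_insert_le _ _)
                have : ({R.erase p, {p}} : Finset (Finset ℂ)).card ≤ 2 :=
                  le_trans (Finset.card_insert_le _ _) (by simp)
                omega
              have h2fl : 2 ≤ ⌊(2 * S.card : ℝ) / (c * Real.logb 2 (S.card:ℝ))⌋₊ := by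
                apply Nat.le_floor
                rw [le_div_iff₀ hcL]
                push_cast
                nlinarith
              omega
  intro S h2 hgen
  obtain ⟨Part, hx1, hx2, hx3, hx4⟩ := main S.card S le_rfl h2 hgen
  exact ⟨Part, hx1, hx2, hx3, hx4.trans (by
    have := Nat.floor_le_ceil ((2 * S.card : ℝ) / (c * Real.logb 2 (S.card:ℝ)))
    omega)⟩
end

section
/- Let G be the 3-sweep graph of a finite planar point set S with respect to an acute triangle with angles θ_a, θ_b, θ_c. Let q, t ∈ S with t in the wedge W_{q,a}. If t lies to the left of the extended a-path of q, then there is a path in G from q to t all of whose edge vectors lie in a common closed wedge of width θ_a + θ_b; moreover the path consists of a prefix of the a-path of q followed by a reversed prefix of the b-path of t. -/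
open Real

noncomputable section

/-- The cross product (signed area) of two plane vectors. -/
def cross2 (u v : ℂ) : ℝ := u.re * v.im - u.im * v.re

/-- Counterclockwise rotation of a plane vector by `90°`. -/
def perp2 (u : ℂ) : ℂ := Complex.I * u

/-- Membership in the closed wedge with apex `q` spanned by the directions `X` and `Y`. -/
def InWedge (X Y q p : ℂ) : Prop :=
  ∃ s u : ℝ, 0 ≤ s ∧ 0 ≤ u ∧ p - q = s • X + u • Y

/-- `p` is a sweep-nearest neighbor of `q` in the wedge spanned by `X` and `Y`. -/
def IsSweepNbr (X Y : ℂ) (S : Finset ℂ) (q p : ℂ) : Prop :=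
  p ∈ S ∧ p ≠ q ∧ InWedge X Y q p ∧
    ∀ r ∈ S, r ≠ q → InWedge X Y q r →
      |dot2 (perp2 (X - Y)) (p - q)| ≤ |dot2 (perp2 (X - Y)) (r - q)|

/- ### Auxiliary lemmas -/

lemma dot2_perp2 (w u : ℂ) : dot2 (perp2 w) u = cross2 w u := by
  simp [dot2, perp2, cross2, Complex.mul_re, Complex.mul_im]; ring

lemma cross2_sub (w a b : ℂ) : cross2 w (a - b) = cross2 w a - cross2 w b := by
  simp [cross2]; ring

lemma cross2_smul_add (w a b : ℂ) (s u : ℝ) :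
    cross2 w (s • a + u • b) = s * cross2 w a + u * cross2 w b := by
  simp [cross2, Complex.real_smul, Complex.mul_re, Complex.mul_im]; ring

lemma cross2_identity (n m u z : ℂ) :
    cross2 n u * cross2 m z - cross2 m u * cross2 n z = cross2 n m * cross2 u z := by
  simp [cross2]; ring

lemma wedge_comm (X Y q p : ℂ) : InWedge X Y q p ↔ InWedge Y X q p := by
  constructor <;> rintro ⟨s, u, hs, hu, h⟩ <;> exact ⟨u, s, hu, hs, by rw [h]; ring⟩

lemma wedge_iff (X Y q p : ℂ) (hXY : 0 < cross2 X Y) :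
    InWedge X Y q p ↔ 0 ≤ cross2 X (p - q) ∧ cross2 Y (p - q) ≤ 0 := by
  constructor
  · rintro ⟨s, u, hs, hu, h⟩
    rw [h, cross2_smul_add, cross2_smul_add]
    have h1 : cross2 X X = 0 := by simp [cross2]; ring
    have h2 : cross2 Y Y = 0 := by simp [cross2]; ring
    have h3 : cross2 Y X = -cross2 X Y := by simp [cross2]; ring
    rw [h1, h2, h3]
    constructor <;> nlinarith
  · rintro ⟨h1, h2⟩
    have hK : cross2 X Y ≠ 0 := ne_of_gt hXY
    have key : (cross2 X Y) • (p - q) = (-cross2 Y (p - q)) • X + (cross2 X (p - q)) • Y := by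
      apply Complex.ext <;>
        simp only [cross2, Complex.add_re, Complex.add_im, Complex.real_smul,
          Complex.mul_re, Complex.mul_im, Complex.ofReal_re, Complex.ofReal_im,
          Complex.sub_re, Complex.sub_im] <;> ring
    refine ⟨-cross2 Y (p - q) / cross2 X Y, cross2 X (p - q) / cross2 X Y,
      div_nonneg (by linarith) hXY.le, div_nonneg h1 hXY.le, ?_⟩
    rw [div_eq_inv_mul, div_eq_inv_mul, mul_smul, mul_smul, ← smul_add, ← key,
      inv_smul_smul₀ hK]

lemma exists_sweepNbr (X Y : ℂ) (S : Finset ℂ) (q r0 : ℂ) (hr0 : r0 ∈ S)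
    (hne : r0 ≠ q) (hw : InWedge X Y q r0) : ∃ p, IsSweepNbr X Y S q p := by
  classical
  set T := S.filter (fun r => r ≠ q ∧ InWedge X Y q r) with hT
  have hTne : T.Nonempty := ⟨r0, by simp [hT, hr0, hne, hw]⟩
  obtain ⟨p, hpT, hmin⟩ :=
    T.exists_min_image (fun r => |dot2 (perp2 (X - Y)) (r - q)|) hTne
  simp only [hT, Finset.mem_filter] at hpT
  exact ⟨p, hpT.1, hpT.2.1, hpT.2.2, fun r hr hrq hrw =>
    hmin r (by simp [hT, hr, hrq, hrw])⟩

lemma find_level (H : ℕ → ℝ) (N : ℕ) (hN : 0 < N) (c : ℝ) (h0 : H 0 ≤ c)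
    (hk : c ≤ H N) : ∃ l < N, H l ≤ c ∧ c ≤ H (l + 1) := by
  induction N with
  | zero => omega
  | succ N ih =>
    by_cases hc : H N ≤ c
    · exact ⟨N, Nat.lt_succ_self N, hc, hk⟩
    · push_neg at hc
      rcases Nat.eq_zero_or_pos N with h | h
      · subst h; linarith
      · obtain ⟨l, hl, h1, h2⟩ := ih h hc.le
        exact ⟨l, hl.trans (Nat.lt_succ_self N), h1, h2⟩

lemma mono_of_step (f : ℕ → ℝ) (k : ℕ) (h : ∀ l < k, f l ≤ f (l + 1)) :
    ∀ i j, i ≤ j → j ≤ k → f i ≤ f j := by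
  intro i j hij hjk
  induction j with
  | zero =>
    obtain rfl : i = 0 := Nat.le_zero.mp hij
    exact le_refl _
  | succ j ih =>
    rcases Nat.lt_or_ge i (j + 1) with hi | hi
    · exact (ih (by omega) (by omega)).trans (h j (by omega))
    · obtain rfl : i = j + 1 := le_antisymm hij hi
      exact le_refl _

/-- "Height" coordinate (proportional to the vertical coordinate). -/
def htc (n m P : ℂ) : ℝ := cross2 m P - cross2 n P

/-- Side-of-edge determinant for the `l`-th edge of the path `v`, in oblique coordinates. -/
def DD (n m : ℂ) (v : ℕ → ℂ) (l : ℕ) (p : ℂ) : ℝ :=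
  (cross2 n (v (l + 1)) - cross2 n (v l)) * (cross2 m p - cross2 m (v l))
    - (cross2 m (v (l + 1)) - cross2 m (v l)) * (cross2 n p - cross2 n (v l))

/-- `p` lies strictly to the left of the extended `a`-path, in oblique coordinates. -/
def LftP (n m : ℂ) (v : ℕ → ℂ) (k : ℕ) (p : ℂ) : Prop :=
  (∃ l, l < k ∧ htc n m (v l) ≤ htc n m p ∧ htc n m p ≤ htc n m (v (l + 1)) ∧
    DD n m v l p < 0)
  ∨ (htc n m (v k) ≤ htc n m p ∧ cross2 n (v k) < cross2 n p)

/-- Setting: an acute triangle `A B C` with `BC` horizontal, `A` below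
`BC` and `B` to the left of `C` (the clockwise orientation used in the paper), a finite
point set `S`, points `q t ∈ S` with `t` in the wedge `W_{q,a}`, the maximal `a`-path
`v 0 = q, …, v k` of `q`, and the maximal `b`-path `w 0 = t, …, w k'` of `t`.
If `t` lies (strictly) to the left of the extended `a`-path of `q`, then the two paths
meet at a common vertex `v i = w j`, so that the prefix of the `a`-path of `q` up to it,
followed by the reversed prefix of the `b`-path of `t`, is a path in `G` from `q` to `t`;
moreover all its edge vectors lie in the common closed wedge of width `θ_a + θ_b`
spanned by the directions `C - A` and `B - C`. -/
theorem sweep_graph_angle_monotone_path (A B C : ℂ)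
    (hacuteA : 0 < dot2 (B - A) (C - A)) (hacuteB : 0 < dot2 (A - B) (C - B))
    (hacuteC : 0 < dot2 (A - C) (B - C))
    (hBC : B.im = C.im) (hAbelow : A.im < B.im) (hBleft : B.re < C.re)
    (S : Finset ℂ) (q t : ℂ) (hqS : q ∈ S) (htS : t ∈ S) (hqt : t ≠ q)
    (htW : InWedge (B - A) (C - A) q t)
    (k : ℕ) (v : ℕ → ℂ) (hv0 : v 0 = q)
    (hvstep : ∀ l < k, IsSweepNbr (B - A) (C - A) S (v l) (v (l + 1)))
    (hvmax : ∀ p : ℂ, ¬ IsSweepNbr (B - A) (C - A) S (v k) p)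
    (k' : ℕ) (w : ℕ → ℂ) (hw0 : w 0 = t)
    (hwstep : ∀ l < k', IsSweepNbr (A - B) (C - B) S (w l) (w (l + 1)))
    (hwmax : ∀ p : ℂ, ¬ IsSweepNbr (A - B) (C - B) S (w k') p)
    (hleft : (∃ l < k, (v l).im ≤ t.im ∧ t.im ≤ (v (l + 1)).im ∧
        0 < cross2 (v (l + 1) - v l) (t - v l)) ∨
      ((v k).im ≤ t.im ∧ 0 < cross2 (B - A) (t - v k))) :
    ∃ i ≤ k, ∃ j ≤ k', v i = w j ∧
      (∀ l < i, ∃ s u : ℝ, 0 ≤ s ∧ 0 ≤ u ∧ v (l + 1) - v l = s • (C - A) + u • (B - C)) ∧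
      (∀ l < j, ∃ s u : ℝ, 0 ≤ s ∧ 0 ≤ u ∧ w l - w (l + 1) = s • (C - A) + u • (B - C)) := by
  classical
  set n : ℂ := B - A with hn
  set m : ℂ := C - A with hm
  have hnim : 0 < n.im := by rw [hn]; simp only [Complex.sub_im]; linarith
  have hmn : m.im = n.im := by rw [hn, hm]; simp only [Complex.sub_im]; linarith
  have hc : 0 < m.re - n.re := by rw [hn, hm]; simp only [Complex.sub_re]; linarith
  have hD : 0 < cross2 m n := by
    have e : cross2 m n = n.im * (m.re - n.re) := by simp only [cross2, hmn]; ring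
    rw [e]; positivity
  have hDnm : cross2 n m < 0 := by
    have e : cross2 n m = -cross2 m n := by simp only [cross2]; ring
    rw [e]; linarith
  have hhtim : ∀ P : ℂ, htc n m P = (m.re - n.re) * P.im := by
    intro P; simp only [htc, cross2]; rw [hmn]; ring
  -- wedge characterizations
  have hWa : ∀ q' p' : ℂ, InWedge n m q' p' ↔
      (cross2 n p' ≤ cross2 n q' ∧ cross2 m q' ≤ cross2 m p') := by
    intro q' p'
    rw [wedge_comm, wedge_iff m n q' p' hD, cross2_sub, cross2_sub]
    constructor <;> rintro ⟨h1, h2⟩ <;> exact ⟨by linarith, by linarith⟩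
  have hABn : A - B = -n := by rw [hn]; ring
  have hCBmn : C - B = m - n := by rw [hn, hm]; ring
  have hDb : 0 < cross2 (A - B) (C - B) := by
    have e : cross2 (A - B) (C - B) = cross2 m n := by
      rw [hABn, hCBmn]
      simp only [cross2, Complex.neg_re, Complex.neg_im, Complex.sub_re, Complex.sub_im]
      ring
    rw [e]; exact hD
  have hWb : ∀ q' p' : ℂ, InWedge (A - B) (C - B) q' p' ↔
      (cross2 n p' ≤ cross2 n q' ∧ htc n m p' ≤ htc n m q') := by
    intro q' p'
    rw [wedge_iff _ _ _ _ hDb]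
    have e1 : cross2 (A - B) (p' - q') = -(cross2 n p' - cross2 n q') := by
      rw [hABn]
      simp only [cross2, Complex.neg_re, Complex.neg_im, Complex.sub_re, Complex.sub_im]
      ring
    have e2 : cross2 (C - B) (p' - q') = htc n m p' - htc n m q' := by
      rw [hCBmn]
      simp only [cross2, htc, Complex.sub_re, Complex.sub_im]
      ring
    rw [e1, e2]
    constructor <;> rintro ⟨h1, h2⟩ <;> exact ⟨by linarith, by linarith⟩
  -- measures
  have hmeasA : ∀ u : ℂ, dot2 (perp2 (n - m)) u = -(cross2 m u - cross2 n u) := by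
    intro u; rw [dot2_perp2]
    simp only [cross2, Complex.sub_re, Complex.sub_im]; ring
  have hmeasB : ∀ u : ℂ, dot2 (perp2 ((A - B) - (C - B))) u = -cross2 m u := by
    intro u; rw [dot2_perp2]
    have e : (A - B) - (C - B) = -m := by rw [hm]; ring
    rw [e]; simp only [cross2, Complex.neg_re, Complex.neg_im]; ring
  -- path membership
  have hvS : ∀ i ≤ k, v i ∈ S := by
    intro i hi
    induction i with
    | zero => rw [hv0]; exact hqS
    | succ i ih => exact (hvstep i (by omega)).1
  -- step coordinate facts
  have hvx : ∀ l < k, cross2 n (v (l + 1)) ≤ cross2 n (v l) ∧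
      cross2 m (v l) ≤ cross2 m (v (l + 1)) :=
    fun l hl => (hWa _ _).mp (hvstep l hl).2.2.1
  -- injectivity of coordinates
  have hinj : ∀ P Q : ℂ, cross2 n P = cross2 n Q → cross2 m P = cross2 m Q → P = Q := by
    intro P Q h1 h2
    simp only [cross2] at h1 h2
    rw [hmn] at h2
    have key : (m.re - n.re) * (P.im - Q.im) = 0 := by linear_combination h2 - h1
    have him : P.im = Q.im := by
      rcases mul_eq_zero.mp key with h | h
      · exact absurd h (ne_of_gt hc)
      · linarith
    have key2 : n.im * (P.re - Q.re) = 0 := by linear_combination n.re * him - h1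
    have hre : P.re = Q.re := by
      rcases mul_eq_zero.mp key2 with h | h
      · exact absurd h (ne_of_gt hnim)
      · linarith
    exact Complex.ext hre him
  -- a-minimality and emptiness
  have hAM : ∀ l < k, ∀ r ∈ S, r ≠ v l → cross2 n r ≤ cross2 n (v l) →
      cross2 m (v l) ≤ cross2 m r → htc n m (v (l + 1)) ≤ htc n m r := by
    intro l hl r hrS hne hx hy
    have hmin := (hvstep l hl).2.2.2 r hrS hne ((hWa _ _).mpr ⟨hx, hy⟩)
    have e1 : dot2 (perp2 (n - m)) (v (l + 1) - v l) =
        -(htc n m (v (l + 1)) - htc n m (v l)) := by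
      rw [hmeasA, cross2_sub, cross2_sub]; simp only [htc]; ring
    have e2 : dot2 (perp2 (n - m)) (r - v l) = -(htc n m r - htc n m (v l)) := by
      rw [hmeasA, cross2_sub, cross2_sub]; simp only [htc]; ring
    rw [e1, e2, abs_neg, abs_neg] at hmin
    have s1 : 0 ≤ htc n m (v (l + 1)) - htc n m (v l) := by
      have := hvx l hl; simp only [htc]; linarith [this.1, this.2]
    have s2 : 0 ≤ htc n m r - htc n m (v l) := by simp only [htc]; linarith
    rw [abs_of_nonneg s1, abs_of_nonneg s2] at hmin
    linarith
  have hEM : ∀ r ∈ S, cross2 n r ≤ cross2 n (v k) → cross2 m (v k) ≤ cross2 m r →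
      r = v k := by
    intro r hrS hx hy
    by_contra hne
    obtain ⟨p, hp⟩ := exists_sweepNbr n m S (v k) r hrS hne ((hWa _ _).mpr ⟨hx, hy⟩)
    exact hvmax p hp
  -- monotonicity along the a-path
  have hxmono : ∀ i j, i ≤ j → j ≤ k → cross2 n (v j) ≤ cross2 n (v i) := by
    intro i j hij hjk
    have := mono_of_step (fun l => -cross2 n (v l)) k
      (fun l hl => by simpa using neg_le_neg (hvx l hl).1) i j hij hjk
    simpa using this
  have hymono : ∀ i j, i ≤ j → j ≤ k → cross2 m (v i) ≤ cross2 m (v j) :=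
    fun i j hij hjk => mono_of_step (fun l => cross2 m (v l)) k
      (fun l hl => (hvx l hl).2) i j hij hjk
  have hhstrict : ∀ l < k, htc n m (v l) < htc n m (v (l + 1)) := by
    intro l hl
    have h1 := (hvx l hl).1
    have h2 := (hvx l hl).2
    have hne := (hvstep l hl).2.1
    have hle : htc n m (v l) ≤ htc n m (v (l + 1)) := by simp only [htc]; linarith
    rcases hle.lt_or_eq with h | h
    · exact h
    · exfalso
      apply hne
      apply hinj
      · simp only [htc] at h; linarith
      · simp only [htc] at h; linarith
  have hhmono : ∀ i j, i ≤ j → j ≤ k → htc n m (v i) ≤ htc n m (v j) :=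
    fun i j hij hjk => mono_of_step (fun l => htc n m (v l)) k
      (fun l hl => (hhstrict l hl).le) i j hij hjk
  -- initial leftness
  have hLt : LftP n m v k t := by
    rcases hleft with ⟨l, hl, h1, h2, h3⟩ | ⟨h1, h2⟩
    · left
      refine ⟨l, hl, ?_, ?_, ?_⟩
      · rw [hhtim, hhtim]; exact mul_le_mul_of_nonneg_left h1 hc.le
      · rw [hhtim, hhtim]; exact mul_le_mul_of_nonneg_left h2 hc.le
      · have hcid := cross2_identity n m (v (l + 1) - v l) (t - v l)
        rw [cross2_sub, cross2_sub, cross2_sub, cross2_sub] at hcid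
        have key : DD n m v l t = cross2 n m * cross2 (v (l + 1) - v l) (t - v l) := by
          simp only [DD]; linarith
        rw [key]
        exact mul_neg_of_neg_of_pos hDnm h3
    · right
      refine ⟨?_, ?_⟩
      · rw [hhtim, hhtim]; exact mul_le_mul_of_nonneg_left h1 hc.le
      · rw [cross2_sub] at h2; linarith
  -- existence of a b-wedge witness from leftness
  have hEXB : ∀ p : ℂ, p ∈ S → LftP n m v k p →
      ∃ V, V ∈ S ∧ V ≠ p ∧ InWedge (A - B) (C - B) p V := by
    intro p hpS hLp
    rcases hLp with ⟨l, hl, h1, h2, h3⟩ | ⟨h1, h2⟩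
    · have hdx := (hvx l hl).1
      have hdy := (hvx l hl).2
      have hdH := hhstrict l hl
      by_cases hxl : cross2 n (v l) ≤ cross2 n p
      · refine ⟨v l, hvS l hl.le, ?_, (hWb _ _).mpr ⟨hxl, h1⟩⟩
        intro he
        rw [← he] at h3
        have e : DD n m v l (v l) = 0 := by simp only [DD]; ring
        linarith
      · push_neg at hxl
        have hyp : cross2 m (v l) < cross2 m p := by
          by_contra hcon; push_neg at hcon
          have p1 : 0 ≤ (cross2 n (v l) - cross2 n (v (l + 1))) *
              (cross2 m (v l) - cross2 m p) := mul_nonneg (by linarith) (by linarith)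
          have p2 : 0 ≤ (cross2 m (v (l + 1)) - cross2 m (v l)) *
              (cross2 n (v l) - cross2 n p) := mul_nonneg (by linarith) (by linarith)
          have hid : DD n m v l p = (cross2 n (v l) - cross2 n (v (l + 1))) *
              (cross2 m (v l) - cross2 m p) + (cross2 m (v (l + 1)) - cross2 m (v l)) *
              (cross2 n (v l) - cross2 n p) := by simp only [DD]; ring
          rw [hid] at h3; linarith
        have hplne : p ≠ v l := by
          intro he; rw [he] at hxl; exact lt_irrefl _ hxl
        have hAMp := hAM l hl p hpS hplne hxl.le hyp.le
        have hpe : htc n m p = htc n m (v (l + 1)) := le_antisymm h2 hAMp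
        have hxl1 : cross2 n (v (l + 1)) < cross2 n p := by
          by_contra hcon; push_neg at hcon
          have hid : DD n m v l p = (htc n m (v (l + 1)) - htc n m (v l)) *
              (cross2 n (v (l + 1)) - cross2 n p) + (cross2 n (v (l + 1)) - cross2 n (v l)) *
              (htc n m p - htc n m (v (l + 1))) := by simp only [DD, htc]; ring
          have hz : htc n m p - htc n m (v (l + 1)) = 0 := by rw [hpe]; ring
          rw [hid, hz, mul_zero, add_zero] at h3
          have : 0 ≤ (htc n m (v (l + 1)) - htc n m (v l)) *
              (cross2 n (v (l + 1)) - cross2 n p) := mul_nonneg (by linarith) (by linarith)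
          linarith
        refine ⟨v (l + 1), hvS _ hl, ?_, (hWb _ _).mpr ⟨hxl1.le, hpe.ge⟩⟩
        intro he; rw [he] at hxl1; exact lt_irrefl _ hxl1
    · refine ⟨v k, hvS k le_rfl, ?_, (hWb _ _).mpr ⟨h2.le, h1⟩⟩
      intro he; rw [he] at h2; exact lt_irrefl _ h2
  -- the resolution step
  have hresolve : ∀ (r : ℂ) (N : ℕ), 0 < N → N ≤ k → r ∈ S →
      cross2 n r ≤ cross2 n (v 0) →
      htc n m (v 0) ≤ htc n m r → htc n m r ≤ htc n m (v N) →
      (∀ i ≤ k, htc n m (v i) ≤ htc n m r → cross2 m (v i) ≤ cross2 m r) →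
      (∃ i ≤ k, r = v i) ∨ (LftP n m v k r ∧ cross2 n r ≤ cross2 n (v 0)) := by
    intro r N hN hNk hrS hrx0 h0r hrN HY
    obtain ⟨l', hl'N, hH1, hH2⟩ := find_level (fun i => htc n m (v i)) N hN _ h0r hrN
    have hl'k : l' < k := lt_of_lt_of_le hl'N hNk
    have hdx := (hvx l' hl'k).1
    have hdy := (hvx l' hl'k).2
    have hdH := hhstrict l' hl'k
    by_cases hDl : DD n m v l' r < 0
    · exact Or.inr ⟨Or.inl ⟨l', hl'k, hH1, hH2, hDl⟩, hrx0⟩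
    push_neg at hDl
    have hxr : cross2 n r ≤ cross2 n (v l') := by
      by_contra hcon; push_neg at hcon
      have p1 : (cross2 n (v (l' + 1)) - cross2 n (v l')) *
          (htc n m r - htc n m (v l')) ≤ 0 :=
        mul_nonpos_iff.mpr (Or.inr ⟨by linarith, by linarith⟩)
      have p2 : 0 < (htc n m (v (l' + 1)) - htc n m (v l')) *
          (cross2 n r - cross2 n (v l')) := mul_pos (by linarith) (by linarith)
      have hid : DD n m v l' r = (cross2 n (v (l' + 1)) - cross2 n (v l')) *
          (htc n m r - htc n m (v l')) - (htc n m (v (l' + 1)) - htc n m (v l')) *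
          (cross2 n r - cross2 n (v l')) := by simp only [DD, htc]; ring
      rw [hid] at hDl; linarith
    have hyr' : cross2 m (v l') ≤ cross2 m r := HY l' hl'k.le hH1
    by_cases hrv : r = v l'
    · exact Or.inl ⟨l', hl'k.le, hrv⟩
    have hAMr := hAM l' hl'k r hrS hrv hxr hyr'
    have hhte : htc n m r = htc n m (v (l' + 1)) := le_antisymm hH2 hAMr
    have hxr2 : cross2 n r ≤ cross2 n (v (l' + 1)) := by
      by_contra hcon; push_neg at hcon
      have hid : DD n m v l' r = (htc n m (v (l' + 1)) - htc n m (v l')) *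
          (cross2 n (v (l' + 1)) - cross2 n r) + (cross2 n (v (l' + 1)) - cross2 n (v l')) *
          (htc n m r - htc n m (v (l' + 1))) := by simp only [DD, htc]; ring
      have hz : htc n m r - htc n m (v (l' + 1)) = 0 := by rw [hhte]; ring
      rw [hid, hz, mul_zero, add_zero] at hDl
      have : (htc n m (v (l' + 1)) - htc n m (v l')) *
          (cross2 n (v (l' + 1)) - cross2 n r) < 0 :=
        mul_neg_of_pos_of_neg (by linarith) (by linarith)
      linarith
    have hy2 : cross2 m (v (l' + 1)) ≤ cross2 m r := HY (l' + 1) hl'k hhte.ge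
    have hy3 : cross2 m r ≤ cross2 m (v (l' + 1)) := by
      simp only [htc] at hhte; linarith
    have hyeq : cross2 m r = cross2 m (v (l' + 1)) := le_antisymm hy3 hy2
    have hxeq : cross2 n r = cross2 n (v (l' + 1)) := by
      simp only [htc] at hhte; linarith
    exact Or.inl ⟨l' + 1, hl'k, hinj _ _ hxeq hyeq⟩
  -- the main step
  have hstep : ∀ p r : ℂ, p ∈ S → cross2 n p ≤ cross2 n (v 0) → LftP n m v k p →
      IsSweepNbr (A - B) (C - B) S p r →
      (∃ i ≤ k, r = v i) ∨ (LftP n m v k r ∧ cross2 n r ≤ cross2 n (v 0)) := by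
    intro p r hpS hpx0 hLp hsw
    obtain ⟨hrS, hrp, hrw, hrmin⟩ := hsw
    obtain ⟨hxrp, hhrp⟩ := (hWb p r).mp hrw
    have hrx0 : cross2 n r ≤ cross2 n (v 0) := le_trans hxrp hpx0
    have hminY : ∀ V : ℂ, V ∈ S → V ≠ p → cross2 n V ≤ cross2 n p →
        htc n m V ≤ htc n m p → cross2 m V ≤ cross2 m r := by
      intro V hVS hVp hVx hVh
      have hm' := hrmin V hVS hVp ((hWb _ _).mpr ⟨hVx, hVh⟩)
      rw [hmeasB, hmeasB, cross2_sub, cross2_sub] at hm'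
      have s1 : cross2 m r - cross2 m p ≤ 0 := by simp only [htc] at hhrp; linarith
      have s2 : cross2 m V - cross2 m p ≤ 0 := by simp only [htc] at hVh; linarith
      rw [abs_neg, abs_neg, abs_of_nonpos s1, abs_of_nonpos s2] at hm'
      linarith
    rcases hLp with ⟨l, hl, hHl, hHl1, hDlp⟩ | ⟨h1, h2⟩
    · -- Case 1: p is left of edge l
      have hdx := (hvx l hl).1
      have hdy := (hvx l hl).2
      have hdH := hhstrict l hl
      have hML2 : htc n m p = htc n m (v (l + 1)) → cross2 n (v (l + 1)) < cross2 n p := by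
        intro hpe
        by_contra hcon; push_neg at hcon
        have hid : DD n m v l p = (htc n m (v (l + 1)) - htc n m (v l)) *
            (cross2 n (v (l + 1)) - cross2 n p) + (cross2 n (v (l + 1)) - cross2 n (v l)) *
            (htc n m p - htc n m (v (l + 1))) := by simp only [DD, htc]; ring
        have hz : htc n m p - htc n m (v (l + 1)) = 0 := by rw [hpe]; ring
        rw [hid, hz, mul_zero, add_zero] at hDlp
        have : 0 ≤ (htc n m (v (l + 1)) - htc n m (v l)) *
            (cross2 n (v (l + 1)) - cross2 n p) := mul_nonneg (by linarith) (by linarith)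
        linarith
      have hkey : cross2 m (v l) ≤ cross2 m r ∧
          (htc n m p = htc n m (v (l + 1)) → cross2 m (v (l + 1)) ≤ cross2 m r) := by
        by_cases hxlp : cross2 n (v l) ≤ cross2 n p
        · have hvlp : v l ≠ p := by
            intro he
            rw [← he] at hDlp
            have e : DD n m v l (v l) = 0 := by simp only [DD]; ring
            linarith
          refine ⟨hminY (v l) (hvS l hl.le) hvlp hxlp hHl, ?_⟩
          intro hpe
          have hxl1 := hML2 hpe
          have hne1 : v (l + 1) ≠ p := by
            intro he; rw [he] at hxl1; exact lt_irrefl _ hxl1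
          exact hminY (v (l + 1)) (hvS _ hl) hne1 hxl1.le (le_of_eq hpe.symm)
        · push_neg at hxlp
          have hyp : cross2 m (v l) < cross2 m p := by
            by_contra hcon; push_neg at hcon
            have p1 : 0 ≤ (cross2 n (v l) - cross2 n (v (l + 1))) *
                (cross2 m (v l) - cross2 m p) := mul_nonneg (by linarith) (by linarith)
            have p2 : 0 ≤ (cross2 m (v (l + 1)) - cross2 m (v l)) *
                (cross2 n (v l) - cross2 n p) := mul_nonneg (by linarith) (by linarith)
            have hid : DD n m v l p = (cross2 n (v l) - cross2 n (v (l + 1))) *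
                (cross2 m (v l) - cross2 m p) + (cross2 m (v (l + 1)) - cross2 m (v l)) *
                (cross2 n (v l) - cross2 n p) := by simp only [DD]; ring
            rw [hid] at hDlp; linarith
          have hplne : p ≠ v l := by
            intro he; rw [he] at hxlp; exact lt_irrefl _ hxlp
          have hAMp := hAM l hl p hpS hplne hxlp.le hyp.le
          have hpe : htc n m p = htc n m (v (l + 1)) := le_antisymm hHl1 hAMp
          have hxl1 := hML2 hpe
          have hne1 : v (l + 1) ≠ p := by
            intro he; rw [he] at hxl1; exact lt_irrefl _ hxl1
          have h2' := hminY (v (l + 1)) (hvS _ hl) hne1 hxl1.le (le_of_eq hpe.symm)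
          exact ⟨le_trans hdy h2', fun _ => h2'⟩
      obtain ⟨hyrl, himp⟩ := hkey
      have hhr1 : htc n m r ≤ htc n m (v (l + 1)) := le_trans hhrp hHl1
      have h0r : htc n m (v 0) ≤ htc n m r := by
        by_contra hcon; push_neg at hcon
        have hy0 : cross2 m (v 0) ≤ cross2 m r :=
          le_trans (hymono 0 l (Nat.zero_le l) hl.le) hyrl
        simp only [htc] at hcon; linarith
      have HY : ∀ i ≤ k, htc n m (v i) ≤ htc n m r → cross2 m (v i) ≤ cross2 m r := by
        intro i hik hhi
        rcases le_or_gt i l with hil | hil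
        · exact le_trans (hymono i l hil hl.le) hyrl
        · have hi1 : l + 1 ≤ i := hil
          have e1 : htc n m (v (l + 1)) ≤ htc n m (v i) := hhmono (l + 1) i hi1 hik
          have hpe : htc n m p = htc n m (v (l + 1)) :=
            le_antisymm hHl1 (by linarith)
          have h2' := himp hpe
          rcases Nat.lt_or_ge i (l + 2) with hlt | hge
          · obtain rfl : i = l + 1 := by omega
            exact h2'
          · exfalso
            have e2 : htc n m (v (l + 1)) < htc n m (v (l + 2)) := hhstrict (l + 1) (by omega)
            have e3 : htc n m (v (l + 2)) ≤ htc n m (v i) := hhmono (l + 2) i hge hik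
            linarith
      exact hresolve r (l + 1) (Nat.succ_pos l) hl hrS hrx0 h0r hhr1 HY
    · -- Case 2: p is left of the final ray
      have hvkp : v k ≠ p := by
        intro he; rw [he] at h2; exact lt_irrefl _ h2
      have hyrk : cross2 m (v k) ≤ cross2 m r := hminY (v k) (hvS k le_rfl) hvkp h2.le h1
      by_cases hhr : htc n m (v k) ≤ htc n m r
      · by_cases hxr : cross2 n (v k) < cross2 n r
        · exact Or.inr ⟨Or.inr ⟨hhr, hxr⟩, hrx0⟩
        · push_neg at hxr
          exact Or.inl ⟨k, le_rfl, hEM r hrS hxr hyrk⟩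
      · push_neg at hhr
        have h0r : htc n m (v 0) ≤ htc n m r := by
          by_contra hcon; push_neg at hcon
          have hy0 : cross2 m (v 0) ≤ cross2 m r :=
            le_trans (hymono 0 k (Nat.zero_le k) le_rfl) hyrk
          simp only [htc] at hcon; linarith
        have hk0 : 0 < k := by
          rcases Nat.eq_zero_or_pos k with h | h
          · exfalso; rw [h] at hhr; linarith
          · exact h
        have HY : ∀ i ≤ k, htc n m (v i) ≤ htc n m r → cross2 m (v i) ≤ cross2 m r :=
          fun i hik _ => le_trans (hymono i k hik le_rfl) hyrk
        exact hresolve r k hk0 le_rfl hrS hrx0 h0r hhr.le HY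
  -- the induction along the b-path
  have hInv : ∀ j ≤ k', (∃ j' ≤ j, ∃ i ≤ k, w j' = v i) ∨
      (w j ∈ S ∧ cross2 n (w j) ≤ cross2 n (v 0) ∧ LftP n m v k (w j)) := by
    intro j hj
    induction j with
    | zero =>
      right
      refine ⟨by rw [hw0]; exact htS, ?_, by rw [hw0]; exact hLt⟩
      rw [hw0, hv0]
      exact ((hWa q t).mp htW).1
    | succ j ih =>
      rcases ih (by omega) with ⟨j', hj', hex⟩ | ⟨h1, h2, h3⟩
      · exact Or.inl ⟨j', by omega, hex⟩
      · rcases hstep (w j) (w (j + 1)) h1 h2 h3 (hwstep j (by omega)) with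
          ⟨i, hi, he⟩ | ⟨hL, hx⟩
        · exact Or.inl ⟨j + 1, le_rfl, i, hi, he⟩
        · exact Or.inr ⟨(hwstep j (by omega)).1, hx, hL⟩
  rcases hInv k' le_rfl with ⟨j', hj', i, hi, he⟩ | ⟨h1, h2, h3⟩
  · refine ⟨i, hi, j', hj', he.symm, ?_, ?_⟩
    · intro l hl
      obtain ⟨s, u, hs, hu, hsum⟩ := (hvstep l (lt_of_lt_of_le hl hi)).2.2.1
      refine ⟨s + u, s, by linarith, hs, ?_⟩
      rw [hsum]
      have hnm : n = m + (B - C) := by rw [hn, hm]; ring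
      rw [hnm]; module
    · intro l hl
      obtain ⟨s, u, hs, hu, hsum⟩ := (hwstep l (lt_of_lt_of_le hl hj')).2.2.1
      refine ⟨s, s + u, hs, by linarith, ?_⟩
      have e : w l - w (l + 1) = -(w (l + 1) - w l) := by ring
      rw [e, hsum, hABn, hCBmn]
      have hnm : n = m + (B - C) := by rw [hn, hm]; ring
      rw [hnm]; module
  · exfalso
    obtain ⟨V, hVS, hVne, hVw⟩ := hEXB (w k') h1 h3
    obtain ⟨pp, hpp⟩ := exists_sweepNbr (A - B) (C - B) S (w k') V hVS hVne hVw
    exact hwmax pp hpp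
end
end

section
/- Let b be a point, W a closed wedge with apex b of angular width 2α (0 < α < 90°), and let a, w be points in W with w ≠ a. Suppose the orthogonal projection of w onto the bisector ray of W is at most as far from b as the projection of a (w is bisector-closer to b than a). Then the angle ∠ b w a (the interior angle of the triangle at w, i.e., the angle between vectors b − w and a − w) is at least 90° − α. -/
open Real

noncomputable section

private lemma key_ineq_s12 (cα sα s t p q : ℝ) (hc : 0 < cα) (hs0 : 0 ≤ sα)
    (hpyth : cα ^ 2 + sα ^ 2 = 1) (hst : s ≤ t)
    (hv : Real.sqrt (s ^ 2 + q ^ 2) * cα ≤ s) :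
    s * (s - t) + q * (q - p) ≤
      sα * (Real.sqrt (s ^ 2 + q ^ 2) * Real.sqrt ((t - s) ^ 2 + (p - q) ^ 2)) := by
  have hs : 0 ≤ s := le_trans (by positivity) hv
  have h1 : (Real.sqrt (s ^ 2 + q ^ 2)) ^ 2 = s ^ 2 + q ^ 2 :=
    Real.sq_sqrt (by positivity)
  have h2 : (Real.sqrt (s ^ 2 + q ^ 2) * cα) ^ 2 ≤ s ^ 2 := by
    have := mul_self_le_mul_self (by positivity) hv
    nlinarith
  have hq2 : q ^ 2 * cα ^ 2 ≤ s ^ 2 * sα ^ 2 := by nlinarith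
  have hq : |q| ≤ sα * Real.sqrt (s ^ 2 + q ^ 2) := by
    rw [← Real.sqrt_sq_eq_abs]
    calc Real.sqrt (q ^ 2) ≤ Real.sqrt ((sα * Real.sqrt (s ^ 2 + q ^ 2)) ^ 2) := by
          apply Real.sqrt_le_sqrt
          rw [mul_pow, h1]
          nlinarith
      _ = sα * Real.sqrt (s ^ 2 + q ^ 2) := Real.sqrt_sq (by positivity)
  have hqp : |q - p| ≤ Real.sqrt ((t - s) ^ 2 + (p - q) ^ 2) := by
    rw [← Real.sqrt_sq_eq_abs]
    apply Real.sqrt_le_sqrt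
    nlinarith [sq_nonneg (t - s)]
  calc s * (s - t) + q * (q - p) ≤ q * (q - p) := by nlinarith
    _ ≤ |q| * |q - p| := by rw [← abs_mul]; exact le_abs_self _
    _ ≤ (sα * Real.sqrt (s ^ 2 + q ^ 2)) * Real.sqrt ((t - s) ^ 2 + (p - q) ^ 2) :=
        mul_le_mul hq hqp (abs_nonneg _) (by positivity)
    _ = sα * (Real.sqrt (s ^ 2 + q ^ 2) * Real.sqrt ((t - s) ^ 2 + (p - q) ^ 2)) := by ring

set_option maxHeartbeats 1000000 in
/-- Let `W` be the closed wedge with apex `b`, half-angle `α`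
(total width `2α`) and unit bisector direction `d`, and let `a, w ∈ W` with `w ≠ a`.
If `w` is bisector-closer to `b` than `a` (the projection of `w - b` on `d` is at most
that of `a - b`), then the interior angle of the triangle at `w`, i.e. the angle
between `b - w` and `a - w`, is at least `90° - α`. -/
theorem bisector_nearest_angle_bound (α : ℝ) (hα0 : 0 < α) (hα1 : α < π / 2)
    (b d a w : ℂ) (hd : ‖d‖ = 1)
    (haW : ‖a - b‖ * Real.cos α ≤ dot2 (a - b) d)
    (hwW : ‖w - b‖ * Real.cos α ≤ dot2 (w - b) d)
    (hwa : w ≠ a)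
    (hproj : dot2 (w - b) d ≤ dot2 (a - b) d) :
    π / 2 - α ≤ InnerProductGeometry.angle (b - w) (a - w) := by
  have hcα : 0 < Real.cos α := Real.cos_pos_of_mem_Ioo ⟨by linarith [Real.pi_pos], hα1⟩
  have hsα : 0 < Real.sin α := Real.sin_pos_of_pos_of_lt_pi hα0 (by linarith [Real.pi_pos])
  have hd2 : d.re * d.re + d.im * d.im = 1 := by
    have h := hd
    have : Complex.normSq d = 1 := by
      rw [Complex.normSq_eq_norm_sq, h]; norm_num
    rwa [Complex.normSq_apply] at this
  set s : ℝ := dot2 (w - b) d with hs_def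
  set t : ℝ := dot2 (a - b) d with ht_def
  set q : ℝ := (w - b).im * d.re - (w - b).re * d.im with hq_def
  set p : ℝ := (a - b).im * d.re - (a - b).re * d.im with hp_def
  have hnv : ‖w - b‖ = Real.sqrt (s ^ 2 + q ^ 2) := by
    rw [Complex.norm_def, Complex.normSq_apply]
    congr 1
    simp only [hs_def, hq_def, dot2]
    nlinarith [hd2]
  have hny : ‖a - w‖ = Real.sqrt ((t - s) ^ 2 + (p - q) ^ 2) := by
    rw [Complex.norm_def, Complex.normSq_apply]
    congr 1
    simp only [ht_def, hs_def, hp_def, hq_def, dot2, Complex.sub_re, Complex.sub_im]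
    nlinarith [hd2]
  have hnx : ‖b - w‖ = Real.sqrt (s ^ 2 + q ^ 2) := by
    rw [← hnv, ← norm_neg]; ring_nf
  have hinner : (inner ℝ (b - w) (a - w) : ℝ) = s * (s - t) + q * (q - p) := by
    rw [Complex.inner]
    simp only [Complex.mul_re, Complex.conj_re, Complex.conj_im, Complex.sub_re,
      Complex.sub_im, hs_def, ht_def, hq_def, hp_def, dot2]
    linear_combination (-((b.re - w.re) * (a.re - w.re) + (b.im - w.im) * (a.im - w.im))) * hd2
  have hwv : Real.sqrt (s ^ 2 + q ^ 2) * Real.cos α ≤ s := by rw [← hnv]; exact hwW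
  have hkey : (inner ℝ (b - w) (a - w) : ℝ) ≤
      Real.sin α * (‖b - w‖ * ‖a - w‖) := by
    rw [hinner, hnx, hny]
    have hpyth : Real.cos α ^ 2 + Real.sin α ^ 2 = 1 := by
      nlinarith [Real.sin_sq_add_cos_sq α]
    exact key_ineq_s12 (Real.cos α) (Real.sin α) s t p q hcα hsα.le hpyth hproj hwv
  have hcos : Real.cos (InnerProductGeometry.angle (b - w) (a - w)) ≤ Real.sin α := by
    rw [InnerProductGeometry.cos_angle]
    rcases eq_or_lt_of_le (mul_nonneg (norm_nonneg (b - w)) (norm_nonneg (a - w))) with h | h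
    · rw [← h, div_zero]; exact hsα.le
    · rw [div_le_iff₀ h]; linarith [hkey]
  by_contra hlt
  push_neg at hlt
  have h1 : Real.cos (π / 2 - α) < Real.cos (InnerProductGeometry.angle (b - w) (a - w)) := by
    apply Real.cos_lt_cos_of_nonneg_of_le_pi (InnerProductGeometry.angle_nonneg _ _)
      (by linarith [Real.pi_pos]) hlt
  rw [Real.cos_pi_div_two_sub] at h1
  linarith
end
end

section
/- Let P = (v₁, …, v_i) be an (x,−y)-convex path (x-coordinates strictly increasing, y-coordinates strictly decreasing, turning right), with perpendicular rays ℓ_q at each v_q orthogonal to edge v_{q−1}v_q entering the region R above P, subdividing R into regions R₀, …, R_i. If w ∈ R_q and 1 ≤ t ≤ q, then the path v_t, v_{t+1}, …, v_q, w has all edge vectors lying in the closed 90° wedge bounded by the direction of ℓ_q and the direction of the line through v_{q−1}, v_q (oriented toward v_q); hence this path is angle-monotone of width 90°. -/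
open Real

noncomputable section

/-- Let `v 1, …, v i` be an `(x,-y)`-convex path (x-coordinates
strictly increasing, y-coordinates strictly decreasing, turning right).  Let `R` be the
region above the path (intersection of the closed half-planes to the left of each
directed edge), and let `R_q` be the part of `R` between the perpendicular rays `ℓ_q`
(at `v q`, orthogonal to the edge `v (q-1) v q`) and `ℓ_{q+1}`.  If `w ∈ R_q` and
`1 ≤ t ≤ q`, then every edge vector of the path `v t, …, v q, w` lies in the closed
`90°` wedge bounded by the direction of the edge `v (q-1) v q` and the direction of
`ℓ_q` (its left perpendicular); hence this path is angle-monotone of width `90°`. -/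
theorem convex_path_region_angle_monotone (i : ℕ) (v : ℕ → ℂ)
    (hmono : ∀ q : ℕ, 1 ≤ q → q < i →
      (v q).re < (v (q + 1)).re ∧ (v (q + 1)).im < (v q).im)
    (hconv : ∀ q : ℕ, 1 ≤ q → q + 1 < i →
      cross2 (v (q + 1) - v q) (v (q + 2) - v (q + 1)) < 0)
    (q t : ℕ) (ht : 1 ≤ t) (htq : t ≤ q) (hq : 2 ≤ q) (hqi : q ≤ i)
    (w : ℂ)
    (hwR : ∀ l : ℕ, 1 ≤ l → l < i → 0 ≤ cross2 (v (l + 1) - v l) (w - v l))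
    (hwl : 0 ≤ dot2 (w - v q) (v q - v (q - 1)))
    (hwr : q < i → dot2 (w - v (q + 1)) (v (q + 1) - v q) ≤ 0) :
    (∀ l : ℕ, t ≤ l → l < q →
      0 ≤ dot2 (v (l + 1) - v l) (v q - v (q - 1)) ∧
      0 ≤ cross2 (v q - v (q - 1)) (v (l + 1) - v l)) ∧
    (0 ≤ dot2 (w - v q) (v q - v (q - 1)) ∧ 0 ≤ cross2 (v q - v (q - 1)) (w - v q)) ∧
    ∃ d : ℂ, ‖d‖ = 1 ∧
      (∀ l : ℕ, t ≤ l → l < q →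
        ‖v (l + 1) - v l‖ * Real.cos (π / 4) ≤ dot2 (v (l + 1) - v l) d) ∧
      ‖w - v q‖ * Real.cos (π / 4) ≤ dot2 (w - v q) d := by
    -- basic edge properties
  have hedge : ∀ k : ℕ, 1 ≤ k → k < i →
      0 < (v (k + 1) - v k).re ∧ (v (k + 1) - v k).im < 0 := by
    intro k hk hki
    have h := hmono k hk hki
    constructor <;> simp [Complex.sub_re, Complex.sub_im] <;> linarith [h.1, h.2]
  have hq1 : 1 ≤ q - 1 := by omega
  have hq1i : q - 1 < i := by omega
  have hq1s : q - 1 + 1 = q := by omega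
  set e : ℂ := v q - v (q - 1) with he
  have heq : e = v (q - 1 + 1) - v (q - 1) := by rw [hq1s]
  have her : 0 < e.re ∧ e.im < 0 := by rw [heq]; exact hedge (q - 1) hq1 hq1i
  -- slopes decrease: cross2 (edge m) (edge l) form
  have key : ∀ m : ℕ, ∀ l : ℕ, 1 ≤ l → l ≤ m → m < i →
      (v (m + 1) - v m).im * (v (l + 1) - v l).re ≤
      (v (l + 1) - v l).im * (v (m + 1) - v m).re := by
    intro m l hl hlm
    induction m, hlm using Nat.le_induction with
    | base => intro _; exact le_refl _
    | succ m hm ih =>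
      intro hmi
      have hmi' : m < i := by omega
      have ihm := ih hmi'
      have hc := hconv m (by omega) hmi
      simp only [cross2] at hc
      obtain ⟨hMre, _⟩ := hedge m (by omega) hmi'
      obtain ⟨hNre, _⟩ := hedge (m + 1) (by omega) hmi
      obtain ⟨hLre, _⟩ := hedge l hl (by omega)
      have h1 : (v (m + 1) - v m).re * ((v (m + 2) - v (m + 1)).im * (v (l + 1) - v l).re)
          < (v (m + 1) - v m).re * ((v (l + 1) - v l).im * (v (m + 2) - v (m + 1)).re) := by
        nlinarith [mul_lt_mul_of_pos_right hc hLre,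
          mul_le_mul_of_nonneg_right ihm (le_of_lt hNre)]
      have := lt_of_mul_lt_mul_left h1 (le_of_lt hMre)
      -- indices: m + 1 + 1 = m + 2
      have hidx : m + 1 + 1 = m + 2 := rfl
      rw [hidx]
      linarith
  -- Part 1
  have part1 : ∀ l : ℕ, t ≤ l → l < q →
      0 ≤ dot2 (v (l + 1) - v l) e ∧ 0 ≤ cross2 e (v (l + 1) - v l) := by
    intro l hl hlq
    obtain ⟨hLre, hLim⟩ := hedge l (by omega) (by omega)
    constructor
    · simp only [dot2]
      nlinarith [mul_pos hLre her.1, mul_pos_of_neg_of_neg hLim her.2]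
    · have hk := key (q - 1) l (by omega) (by omega) hq1i
      rw [hq1s, ← he] at hk
      simp only [cross2]
      linarith
  -- Part 2
  have hwcross : 0 ≤ cross2 e (w - v q) := by
    have h := hwR (q - 1) hq1 hq1i
    rw [hq1s, ← he] at h
    have hid : cross2 e (w - v q) = cross2 e (w - v (q - 1)) := by
      simp only [cross2, he, Complex.sub_re, Complex.sub_im]; ring
    rw [hid]; exact h
  -- the direction d
  have hn : 0 < ‖e‖ := by
    rw [norm_pos_iff]
    intro h0
    rw [h0] at her
    simp at her
  set n : ℝ := ‖e‖ with hndef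
  have hnsq : n ^ 2 = e.re ^ 2 + e.im ^ 2 := by
    rw [hndef, Complex.sq_norm, Complex.normSq_apply]; ring
  set c : ℝ := Real.sqrt 2 / 2 with hcdef
  have hc2 : c ^ 2 = 1 / 2 := by
    rw [hcdef, div_pow, Real.sq_sqrt (by norm_num : (2:ℝ) ≥ 0)]; norm_num
  have hcpos : 0 < c := by positivity
  set d : ℂ := ((c / n : ℝ) : ℂ) * (e + Complex.I * e) with hddef
  have hdre : d.re = c / n * (e.re - e.im) := by
    rw [hddef]
    simp only [Complex.mul_re, Complex.ofReal_re, Complex.ofReal_im, Complex.add_re,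
      Complex.add_im, Complex.mul_im, Complex.I_re, Complex.I_im]
    ring
  have hdim : d.im = c / n * (e.im + e.re) := by
    rw [hddef]
    simp only [Complex.mul_re, Complex.ofReal_re, Complex.ofReal_im, Complex.add_re,
      Complex.add_im, Complex.mul_im, Complex.I_re, Complex.I_im]
    ring
  have hnormsq : ∀ z : ℂ, ‖z‖ ^ 2 = z.re ^ 2 + z.im ^ 2 := by
    intro z
    rw [Complex.sq_norm, Complex.normSq_apply]; ring
  have hdnorm : ‖d‖ = 1 := by
    have h1 : ‖d‖ ^ 2 = (c / n) ^ 2 * (2 * n ^ 2) := by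
      rw [hnormsq d, hdre, hdim, hnsq]; ring
    have h2 : (c / n) ^ 2 * (2 * n ^ 2) = c ^ 2 * 2 := by
      field_simp
    have hsq : ‖d‖ ^ 2 = 1 := by rw [h1, h2, hc2]; norm_num
    calc ‖d‖ = Real.sqrt (‖d‖ ^ 2) := (Real.sqrt_sq (norm_nonneg d)).symm
    _ = Real.sqrt 1 := by rw [hsq]
    _ = 1 := Real.sqrt_one
  have main : ∀ u : ℂ, 0 ≤ dot2 u e → 0 ≤ cross2 e u →
      ‖u‖ * Real.cos (π / 4) ≤ dot2 u d := by
    intro u hA hB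
    have hlag : (dot2 u e) ^ 2 + (cross2 e u) ^ 2 = (‖u‖ * n) ^ 2 := by
      rw [mul_pow, hnormsq u, hnsq]
      simp only [dot2, cross2]; ring
    have hup : ‖u‖ * n ≤ dot2 u e + cross2 e u := by
      nlinarith [mul_nonneg hA hB, mul_nonneg (norm_nonneg u) (le_of_lt hn)]
    have hd : dot2 u d = c / n * (dot2 u e + cross2 e u) := by
      simp only [dot2, cross2, hdre, hdim]; ring
    rw [Real.cos_pi_div_four, ← hcdef, hd, div_mul_eq_mul_div, le_div_iff₀ hn]
    calc ‖u‖ * c * n = c * (‖u‖ * n) := by ring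
    _ ≤ c * (dot2 u e + cross2 e u) := mul_le_mul_of_nonneg_left hup (le_of_lt hcpos)
  refine ⟨part1, ⟨hwl, hwcross⟩, d, hdnorm, ?_, ?_⟩
  · intro l hl hlq
    obtain ⟨h1, h2⟩ := part1 l hl hlq
    exact main _ h1 h2
  · exact main _ hwl hwcross
end
end

section
/- Let W₁ and W₂ be closed wedges in the plane with apexes q and t respectively, and suppose a point r lies in W₁ ∩ W₂, where the segment from q through r stays in W₁ and the segment from t through r stays in W₂. If segments q r and t r properly cross at an interior point, then q ∈ W₂ or t ∈ W₁. -/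
open Real

noncomputable section

/-- Let `W₁ = W_{q,a}` and `W₂ = W_{t,b}` be the closed wedges with
apexes `q` and `t` determined by an acute triangle `A B C` (in clockwise order).
Suppose a point `r` lies in `W₁ ∩ W₂` (the segments from `q` through `r` and from `t`
through `r` stay in the respective wedges, the wedges being convex), and `r` is interior
(distinct from both apexes, as when the two edges properly cross at `r`).  Then
`q ∈ W₂` or `t ∈ W₁`. -/
theorem crossing_wedges_apex (A B C : ℂ)
    (hacuteA : 0 < dot2 (B - A) (C - A)) (hacuteB : 0 < dot2 (A - B) (C - B))
    (hacuteC : 0 < dot2 (A - C) (B - C))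
    (hcw : cross2 (B - A) (C - A) < 0)
    (q t r : ℂ) (hrq : r ≠ q) (hrt : r ≠ t)
    (hr1 : InWedge (B - A) (C - A) q r) (hr2 : InWedge (A - B) (C - B) t r)
    (hseg1 : segment ℝ q r ⊆ {p : ℂ | InWedge (B - A) (C - A) q p})
    (hseg2 : segment ℝ t r ⊆ {p : ℂ | InWedge (A - B) (C - B) t p}) :
    InWedge (A - B) (C - B) t q ∨ InWedge (B - A) (C - A) q t := by
  obtain ⟨s, u, hs, hu, h1⟩ := hr1
  obtain ⟨s', u', hs', hu', h2⟩ := hr2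
  rcases le_total u u' with h | h
  · left
    exact ⟨s + s' + u, u' - u, by positivity, by linarith,
      by linear_combination (norm := module) h2 - h1⟩
  · right
    exact ⟨s + s' + u', u - u', by positivity, by linarith,
      by linear_combination (norm := module) h1 - h2⟩
end
end
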